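/- Suppose the set of voters V is infinite and the set of alternatives A is finite. Let φ be a group strategy-proof social choice function whose range has cardinality at most 3. Then φ satisfies the preference reversal property. -/

import Mathlib

/-- A weak ordering on the set `A` of alternatives: a reflexive, transitive
and total relation. -/
def IsWeakOrdering {A : Type*} (R : A → A → Prop) : Prop :=
  Reflexive R ∧ Transitive R ∧ ∀ x y : A, R x y ∨ R y x

/-- `x ≻ y`: `x ≿ y` and not `y ≿ x`. -/
def StrictPref {A : Type*} (R : A → A → Prop) (x y : A) : Prop :=
  R x y ∧ ¬ R y x

/-- Individual strategy-proofness: for every profile `P`, voter `v` and feasible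
deviation (a profile `Q` agreeing with `P` off `v`), it is not the case that
`φ Q ≻_{P v} φ P`. -/
def ISP {A V : Type*} (W : V → Set (A → A → Prop)) (φ : (∀ v : V, W v) → A) : Prop :=
  ∀ P Q : ∀ v : V, W v, ∀ v : V, (∀ w : V, w ≠ v → P w = Q w) →
    ¬ StrictPref (P v).1 (φ Q) (φ P)

/-- Group strategy-proofness: there are no nonempty coalition `D`, true profile `P`
and manipulated profile `Q` (agreeing with `P` off `D`) such that every member of
`D` strictly prefers `φ Q` to `φ P` according to its true preference. -/
def GSP {A V : Type*} (W : V → Set (A → A → Prop)) (φ : (∀ v : V, W v) → A) : Prop :=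
  ¬ ∃ (D : Set V) (P Q : ∀ v : V, W v), D.Nonempty ∧ (∀ v ∉ D, P v = Q v) ∧
      ∀ v ∈ D, StrictPref (P v).1 (φ Q) (φ P)

/-- The Preference Reversal property. -/
def PrefReversal {A V : Type*} (W : V → Set (A → A → Prop)) (φ : (∀ v : V, W v) → A) : Prop :=
  ∀ P Q : ∀ v : V, W v, φ P ≠ φ Q →
    ∃ v : V, (P v).1 (φ P) (φ Q) ∧ (Q v).1 (φ Q) (φ P) ∧ P v ≠ Q v

/-- The Almost Preference Reversal property. -/
def AlmostPrefReversal {A V : Type*} (W : V → Set (A → A → Prop))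
    (φ : (∀ v : V, W v) → A) : Prop :=
  ∀ P Q : ∀ v : V, W v, φ P ≠ φ Q →
    (∃ v : V, (P v).1 (φ P) (φ Q) ∧ P v ≠ Q v) ∧
    (∃ w : V, (Q w).1 (φ Q) (φ P) ∧ P w ≠ Q w)

/-- `W` resolves the `P`-indifference at `a`. -/
def Resolves {A : Type*} (W P : A → A → Prop) (a : A) : Prop :=
  ∀ x : A, x ≠ a → P a x → StrictPref W a x

/-- `W` is an `(a,b)`-resolvent of `(P, Q)`. -/
def IsResolvent {A : Type*} (W : A → A → Prop) (a b : A) (P Q : A → A → Prop) : Prop :=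
  Resolves W P a ∧ Resolves W Q b

/-- A complete set of preferences. -/
def CompleteSet {A : Type*} (O : Set (A → A → Prop)) : Prop :=
  ∀ P ∈ O, ∀ Q ∈ O, ∀ a b : A, a ≠ b → ¬ (P a b ∧ Q b a) →
    ∃ W ∈ O, IsResolvent W a b P Q

/-- From a non-strict-preference, totality yields the reverse weak preference. -/
lemma wo_of_not_strict {A : Type*} {R : A → A → Prop} (h : IsWeakOrdering R) {u w : A}
    (hn : ¬ StrictPref R u w) : R w u := by
  by_cases hwu : R w u
  · exact hwu
  · rcases h.2.2 u w with h1 | h2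
    · exact absurd ⟨h1, hwu⟩ hn
    · exact absurd h2 hwu

/-- Among at most three values, two elements distinct from both `a` and `b`
(which are distinct) must coincide. -/
lemma third_value_eq {α : Type*} {x y z a b c d : α}
    (ha : a = x ∨ a = y ∨ a = z) (hb : b = x ∨ b = y ∨ b = z)
    (hc : c = x ∨ c = y ∨ c = z) (hd : d = x ∨ d = y ∨ d = z)
    (hab : a ≠ b) (hca : c ≠ a) (hcb : c ≠ b) (hda : d ≠ a) (hdb : d ≠ b) :
    d = c := by
  rcases ha with rfl | rfl | rfl <;> rcases hb with rfl | rfl | rfl <;>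
    rcases hc with rfl | rfl | rfl <;> rcases hd with rfl | rfl | rfl <;> simp_all

/-- If `V` is infinite, `A` is finite, `φ` is group strategy-proof
and the range of `φ` has cardinality at most 3, then `φ` satisfies the
preference reversal property. -/
theorem gsp_implies_prefReversal_infinite_voters_range_le_three
    {A V : Type*} [Infinite V] [Finite A]
    (W : V → Set (A → A → Prop))
    (hne : ∀ v : V, (W v).Nonempty)
    (hwo : ∀ v : V, ∀ R ∈ W v, IsWeakOrdering R)
    (φ : (∀ v : V, W v) → A)
    (hrange : ∃ x y z : A, ∀ P : ∀ v : V, W v, φ P = x ∨ φ P = y ∨ φ P = z)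
    (hGSP : GSP W φ) :
    PrefReversal W φ := by
  classical
  obtain ⟨x, y, z, hxyz⟩ := hrange
  have hwo' : ∀ (v : V) (R : W v), IsWeakOrdering R.1 := fun v R => hwo v R.1 R.2
  -- A reusable consequence of group strategy-proofness.
  have gsp' : ∀ P Q : ∀ v : V, W v, φ P ≠ φ Q →
      ∃ v, P v ≠ Q v ∧ ¬ StrictPref (P v).1 (φ Q) (φ P) := by
    intro P Q hne'
    by_contra h
    push_neg at h
    have hDne : {v | P v ≠ Q v}.Nonempty := by
      rcases Set.eq_empty_or_nonempty {v | P v ≠ Q v} with he | h'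
      · exfalso
        apply hne'
        have hPQ : P = Q := funext fun v => by
          by_contra hv
          exact (Set.eq_empty_iff_forall_notMem.mp he v) hv
        rw [hPQ]
      · exact h'
    exact hGSP ⟨{v | P v ≠ Q v}, P, Q, hDne,
      fun v hv => not_not.mp hv, fun v hv => h v hv⟩
  have key : ∀ n : ℕ, ∀ P Q : ∀ v : V, W v, φ P ≠ φ Q →
      ((fun v => ((P v).1, (Q v).1)) '' {v | P v ≠ Q v}).ncard ≤ n →
      ∃ v : V, (P v).1 (φ P) (φ Q) ∧ (Q v).1 (φ Q) (φ P) ∧ P v ≠ Q v := by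
    intro n
    induction n with
    | zero =>
      intro P Q hPQ hcard
      exfalso
      have h0 : ((fun v => ((P v).1, (Q v).1)) '' {v | P v ≠ Q v}).ncard = 0 :=
        Nat.le_zero.mp hcard
      have hemp : ((fun v => ((P v).1, (Q v).1)) '' {v | P v ≠ Q v}) = ∅ :=
        (Set.ncard_eq_zero (Set.toFinite _)).mp h0
      have hD : {v | P v ≠ Q v} = ∅ := Set.image_eq_empty.mp hemp
      apply hPQ
      have hPQ' : P = Q := funext fun v =>
        not_not.mp (Set.eq_empty_iff_forall_notMem.mp hD v)
      rw [hPQ']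
    | succ n ih =>
      intro P Q hPQ hcard
      by_contra hviol
      push_neg at hviol
      -- hviol : ∀ v, (P v).1 (φ P) (φ Q) → (Q v).1 (φ Q) (φ P) → P v = Q v
      have hdis : ∀ v, P v ≠ Q v →
          StrictPref (P v).1 (φ Q) (φ P) ∨ StrictPref (Q v).1 (φ P) (φ Q) := by
        intro v hv
        by_cases hA : (P v).1 (φ P) (φ Q)
        · right
          have hB : ¬ (Q v).1 (φ Q) (φ P) := fun hB => hv (hviol v hA hB)
          rcases (hwo' v (Q v)).2.2 (φ P) (φ Q) with h1 | h2
          · exact ⟨h1, hB⟩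
          · exact absurd h2 hB
        · left
          rcases (hwo' v (P v)).2.2 (φ P) (φ Q) with h1 | h2
          · exact absurd h1 hA
          · exact ⟨h2, hA⟩
      -- find a voter with a strict reversal at the true profile P
      have hv0 : ∃ v₀, P v₀ ≠ Q v₀ ∧ StrictPref (P v₀).1 (φ Q) (φ P) := by
        by_contra h0
        push_neg at h0
        obtain ⟨v, hv, hns⟩ := gsp' Q P (Ne.symm hPQ)
        have hv' : P v ≠ Q v := fun h => hv h.symm
        rcases hdis v hv' with h1 | h2
        · exact (h0 v hv') h1
        · exact hns h2
      obtain ⟨v₀, hv₀d, hv₀s⟩ := hv0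
      set C : Set V := {v | P v ≠ Q v ∧ (P v).1 = (P v₀).1 ∧ (Q v).1 = (Q v₀).1} with hCdef
      have hv₀C : v₀ ∈ C := ⟨hv₀d, rfl, rfl⟩
      set R : ∀ v : V, W v := fun v => if v ∈ C then Q v else P v with hRdef
      set H : ∀ v : V, W v := fun v => if v ∈ C then P v else Q v with hHdef
      have hRC : ∀ v ∈ C, R v = Q v := fun v hv => if_pos hv
      have hRnC : ∀ v ∉ C, R v = P v := fun v hv => if_neg hv
      have hHC : ∀ v ∈ C, H v = P v := fun v hv => if_pos hv
      have hHnC : ∀ v ∉ C, H v = Q v := fun v hv => if_neg hv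
      have hmemT : ((P v₀).1, (Q v₀).1) ∈
          ((fun v => ((P v).1, (Q v).1)) '' {v | P v ≠ Q v}) := ⟨v₀, hv₀d, rfl⟩
      have hTcard : (((fun v => ((P v).1, (Q v).1)) '' {v | P v ≠ Q v}) \
          {((P v₀).1, (Q v₀).1)}).ncard ≤ n := by
        have hd := Set.ncard_diff_singleton_of_mem hmemT
        omega
      -- the image of the differing set for (R, Q)
      have hsubR : ((fun v => ((R v).1, (Q v).1)) '' {v | R v ≠ Q v}) ⊆
          ((fun v => ((P v).1, (Q v).1)) '' {v | P v ≠ Q v}) \ {((P v₀).1, (Q v₀).1)} := by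
        rintro t ⟨v, hv, rfl⟩
        have hvC : v ∉ C := fun hvC => hv (hRC v hvC)
        have hRv : R v = P v := hRnC v hvC
        have hPv : P v ≠ Q v := by rw [← hRv]; exact hv
        refine ⟨⟨v, hPv, by show ((P v).1, (Q v).1) = ((R v).1, (Q v).1); rw [hRv]⟩, ?_⟩
        simp only [Set.mem_singleton_iff]
        intro ht
        rw [hRv] at ht
        have h1 : (P v).1 = (P v₀).1 := (Prod.ext_iff.mp ht).1
        have h2 : (Q v).1 = (Q v₀).1 := (Prod.ext_iff.mp ht).2
        exact hvC ⟨hPv, h1, h2⟩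
      have hsubH : ((fun v => ((P v).1, (H v).1)) '' {v | P v ≠ H v}) ⊆
          ((fun v => ((P v).1, (Q v).1)) '' {v | P v ≠ Q v}) \ {((P v₀).1, (Q v₀).1)} := by
        rintro t ⟨v, hv, rfl⟩
        have hvC : v ∉ C := fun hvC => hv (hHC v hvC).symm
        have hHv : H v = Q v := hHnC v hvC
        have hPv : P v ≠ Q v := by rw [← hHv]; exact hv
        refine ⟨⟨v, hPv, by show ((P v).1, (Q v).1) = ((P v).1, (H v).1); rw [hHv]⟩, ?_⟩
        simp only [Set.mem_singleton_iff]
        intro ht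
        rw [hHv] at ht
        have h1 : (P v).1 = (P v₀).1 := (Prod.ext_iff.mp ht).1
        have h2 : (Q v).1 = (Q v₀).1 := (Prod.ext_iff.mp ht).2
        exact hvC ⟨hPv, h1, h2⟩
      -- Case 1 : φ R = φ Q : direct group manipulation by C
      by_cases hRb : φ R = φ Q
      · obtain ⟨v, hv, hns⟩ := gsp' P R (by rw [hRb]; exact hPQ)
        have hvC : v ∈ C := by
          by_contra h
          exact hv (hRnC v h).symm
        apply hns
        rw [hRb, hvC.2.1]
        exact hv₀s
      -- Case 2 : φ R = φ P : apply the induction hypothesis to (R, Q)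
      by_cases hRa : φ R = φ P
      · obtain ⟨v, h1, h2, h3⟩ := ih R Q (by rw [hRa]; exact hPQ)
          (le_trans (Set.ncard_le_ncard hsubR (Set.toFinite _)) hTcard)
        have hvC : v ∉ C := fun h => h3 (hRC v h)
        have hRv : R v = P v := hRnC v hvC
        rw [hRv] at h1 h3
        rw [hRa] at h1 h2
        exact h3 (hviol v h1 h2)
      -- Case 3 : φ R is a third alternative
      obtain ⟨v1, hv1, hns1⟩ := gsp' P R (fun h => hRa h.symm)
      have hv1C : v1 ∈ C := by
        by_contra h
        exact hv1 (hRnC v1 h).symm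
      rw [hv1C.2.1] at hns1
      have hac : (P v₀).1 (φ P) (φ R) := wo_of_not_strict (hwo' v₀ (P v₀)) hns1
      -- Subcase : φ H = φ P : direct group manipulation by C at H
      by_cases hHa : φ H = φ P
      · obtain ⟨v, hv, hns⟩ := gsp' H Q (by rw [hHa]; exact hPQ)
        have hvC : v ∈ C := by
          by_contra h
          exact hv (hHnC v h)
        apply hns
        rw [hHC v hvC, hHa, hvC.2.1]
        exact hv₀s
      -- Subcase : φ H = φ Q : induction hypothesis for (P, H)
      by_cases hHb : φ H = φ Q
      · obtain ⟨v, h1, h2, h3⟩ := ih P H (by rw [hHb]; exact hPQ)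
          (le_trans (Set.ncard_le_ncard hsubH (Set.toFinite _)) hTcard)
        have hvC : v ∉ C := fun h => h3 (hHC v h).symm
        have hHv : H v = Q v := hHnC v hvC
        rw [hHv] at h2 h3
        rw [hHb] at h1 h2
        exact h3 (hviol v h1 h2)
      -- Subcase : φ H is also a third alternative, hence equals φ R
      have hRH : φ H = φ R :=
        third_value_eq (hxyz P) (hxyz Q) (hxyz R) (hxyz H) hPQ hRa hRb hHa hHb
      obtain ⟨v2, hv2, hns2⟩ := gsp' H Q hHb
      have hv2C : v2 ∈ C := by
        by_contra h
        exact hv2 (hHnC v2 h)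
      rw [hHC v2 hv2C, hv2C.2.1, hRH] at hns2
      have hcb : (P v₀).1 (φ R) (φ Q) := wo_of_not_strict (hwo' v₀ (P v₀)) hns2
      exact hv₀s.2 ((hwo' v₀ (P v₀)).2.1 hac hcb)
  intro P Q hPQ
  exact key _ P Q hPQ le_rfl
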